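/- For every δ > 0 and every η > 0 there exists ρ > 0 such that for all ε, τ, t with 0 < ε, 0 < τ ≤ t/2, t ≤ δ/2 and ε/τ < ρ, one has ∫_{B_δ \ B_τ(te₁)} U_{ε,te₁}(y)³·U_{ε,−te₁}(y) dy ≤ η·ε²/t²; that is, the contribution of the region B_δ \ B_τ(te₁) to the cubic cross term is o(ε²/t²) when ε ≪ τ ≪ t. -/

import Mathlib

noncomputable section

open MeasureTheory Real RealInnerProductSpace

/-- Euclidean four-space. -/
abbrev E4 : Type := EuclideanSpace ℝ (Fin 4)

/-- The normalizing constant `c₄ = (6/π²)^(1/4)`. -/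
def c4 : ℝ := (6 / Real.pi ^ 2) ^ ((1 : ℝ) / 4)

/-- The Sobolev constant `S₄ = 8/c₄²`. -/
def S4 : ℝ := 8 / c4 ^ 2

/-- The standard (normalized) bubble `U(x) = c₄ (1+|x|²)⁻¹`. -/
def Ubub (x : E4) : ℝ := c4 * (1 + ‖x‖ ^ 2)⁻¹

/-- The rescaled/translated bubble `U_{ε,x₀}(x) = ε⁻¹ U((x - x₀)/ε)`. -/
def Ueps (ε : ℝ) (x₀ : E4) (x : E4) : ℝ := ε⁻¹ * Ubub (ε⁻¹ • (x - x₀))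

/-- The double bubble `Û_{ε,x₀} = U_{ε,x₀} + U_{ε,-x₀}`. -/
def Uhat (ε : ℝ) (x₀ : E4) (x : E4) : ℝ := Ueps ε x₀ x + Ueps ε (-x₀) x

/-- The first standard basis vector of `ℝ⁴`. -/
def e1 : E4 := EuclideanSpace.single (0 : Fin 4) (1 : ℝ)

/-- The Yamabe (Sobolev) quotient `Q(u) = 6 ∫ |∇u|² / (∫ u⁴)^{1/2}` on `ℝ⁴`. -/
def Qyam (u : E4 → ℝ) : ℝ :=
  6 * (∫ x : E4, ‖gradient u x‖ ^ 2) / Real.sqrt (∫ x : E4, (u x) ^ 4)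

open Set

lemma c4_pos : 0 < c4 := Real.rpow_pos_of_pos (by positivity) _

lemma Ueps_eq {ε : ℝ} (hε : 0 < ε) (x₀ y : E4) :
    Ueps ε x₀ y = c4 * ε * (ε ^ 2 + ‖y - x₀‖ ^ 2)⁻¹ := by
  unfold Ueps Ubub
  rw [norm_smul, Real.norm_eq_abs, abs_of_pos (inv_pos.mpr hε)]
  have hεne : ε ≠ 0 := hε.ne'
  field_simp

lemma radial_int (f : ℝ → ℝ) :
    ∫ x : E4, f ‖x‖ = 4 * (volume (Metric.ball (0:E4) 1)).toReal * ∫ r in Set.Ioi (0:ℝ), r ^ 3 * f r := by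
  rw [MeasureTheory.integral_fun_norm_addHaar (volume : Measure E4) f, finrank_euclideanSpace_fin]
  norm_num
  simp only [measureReal_def]
  ring

lemma int_tail (p : E4) {τ : ℝ} (hτ : 0 < τ) :
    ∫ y in (Metric.ball p τ)ᶜ, ((‖y - p‖ ^ 2)⁻¹) ^ 3
      = 4 * (volume (Metric.ball (0:E4) 1)).toReal * ((τ ^ 2)⁻¹ / 2) := by
  classical
  set F : ℝ → ℝ := fun r => if τ ≤ r then ((r ^ 2)⁻¹) ^ 3 else 0 with hF
  have h1 : ∫ y in (Metric.ball p τ)ᶜ, ((‖y - p‖ ^ 2)⁻¹) ^ 3 = ∫ y : E4, F ‖y - p‖ := by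
    rw [← integral_indicator (Metric.isOpen_ball.measurableSet.compl)]
    refine integral_congr_ae (Filter.Eventually.of_forall fun y => ?_)
    rw [Set.indicator_apply]
    simp only [Set.mem_compl_iff, Metric.mem_ball, dist_eq_norm, not_lt, hF]
  have h2 : ∫ y : E4, F ‖y - p‖ = ∫ y : E4, F ‖y‖ :=
    integral_sub_right_eq_self (fun y => F ‖y‖) p
  rw [h1, h2, radial_int]
  congr 1
  have h3 : ∀ r ∈ Ioi (0:ℝ), r ^ 3 * F r = Set.indicator (Ici τ) (fun r : ℝ => r ^ (-3 : ℝ)) r := by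
    intro r hr
    by_cases h : τ ≤ r
    · have hr0 : (0:ℝ) < r := hr
      simp only [hF, if_pos h, Set.indicator_of_mem (mem_Ici.mpr h)]
      rw [Real.rpow_neg hr0.le, show (3:ℝ) = ((3:ℕ):ℝ) by norm_num, Real.rpow_natCast]
      have hr' : r ≠ 0 := hr0.ne'
      field_simp
    · simp [hF, if_neg h, Set.indicator_of_notMem (fun hc => h (mem_Ici.mp hc))]
  rw [setIntegral_congr_fun measurableSet_Ioi h3, setIntegral_indicator measurableSet_Ici]
  have h4 : Ioi (0:ℝ) ∩ Ici τ = Ici τ :=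
    inter_eq_self_of_subset_right (fun r hr => lt_of_lt_of_le hτ hr)
  rw [h4, integral_Ici_eq_integral_Ioi, integral_Ioi_rpow_of_lt (by norm_num) hτ]
  rw [show (-3 : ℝ) + 1 = -2 by norm_num, Real.rpow_neg hτ.le]
  rw [show (2:ℝ) = ((2:ℕ):ℝ) by norm_num, Real.rpow_natCast]
  ring

lemma int_ball_bound (q : E4) {ε t : ℝ} (hε : 0 < ε) (ht : 0 < t) :
    ∫ y in Metric.ball q t, ε * (ε ^ 2 + ‖y - q‖ ^ 2)⁻¹
      ≤ 4 * (volume (Metric.ball (0:E4) 1)).toReal * (ε * t ^ 2 / 2) := by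
  classical
  set F : ℝ → ℝ := fun r => if r < t then ε * (ε ^ 2 + r ^ 2)⁻¹ else 0 with hF
  have h1 : ∫ y in Metric.ball q t, ε * (ε ^ 2 + ‖y - q‖ ^ 2)⁻¹ = ∫ y : E4, F ‖y - q‖ := by
    rw [← integral_indicator Metric.isOpen_ball.measurableSet]
    refine integral_congr_ae (Filter.Eventually.of_forall fun y => ?_)
    rw [Set.indicator_apply]
    simp only [Metric.mem_ball, dist_eq_norm, hF]
  have h2 : ∫ y : E4, F ‖y - q‖ = ∫ y : E4, F ‖y‖ :=
    integral_sub_right_eq_self (fun y => F ‖y‖) q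
  rw [h1, h2, radial_int]
  have hV : (0:ℝ) ≤ 4 * (volume (Metric.ball (0:E4) 1)).toReal := by positivity
  have key : ∫ r in Ioi (0:ℝ), r ^ 3 * F r ≤ ε * t ^ 2 / 2 := by
    have h3 : ∀ r ∈ Ioi (0:ℝ), r ^ 3 * F r
        = Set.indicator (Iio t) (fun r : ℝ => r ^ 3 * (ε * (ε ^ 2 + r ^ 2)⁻¹)) r := by
      intro r hr
      by_cases h : r < t
      · simp [hF, if_pos h, Set.indicator_of_mem (mem_Iio.mpr h)]
      · simp [hF, if_neg h, Set.indicator_of_notMem (fun hc => h (mem_Iio.mp hc))]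
    rw [setIntegral_congr_fun measurableSet_Ioi h3, setIntegral_indicator measurableSet_Iio]
    have h4 : Ioi (0:ℝ) ∩ Iio t = Ioo 0 t := Ioi_inter_Iio
    rw [h4]
    have hcont : Continuous fun r : ℝ => r ^ 3 * (ε * (ε ^ 2 + r ^ 2)⁻¹) := by
      refine (continuous_pow 3).mul (continuous_const.mul (Continuous.inv₀ ?_ fun r => by positivity))
      exact continuous_const.add (continuous_pow 2)
    have hint1 : IntegrableOn (fun r : ℝ => r ^ 3 * (ε * (ε ^ 2 + r ^ 2)⁻¹)) (Ioo 0 t) :=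
      (hcont.integrableOn_Icc (a := 0) (b := t)).mono_set Ioo_subset_Icc_self
    have hint2 : IntegrableOn (fun r : ℝ => ε * r) (Ioo 0 t) :=
      ((continuous_const.mul continuous_id).integrableOn_Icc (a := 0) (b := t)).mono_set
        Ioo_subset_Icc_self
    have hmono : ∫ r in Ioo (0:ℝ) t, r ^ 3 * (ε * (ε ^ 2 + r ^ 2)⁻¹)
        ≤ ∫ r in Ioo (0:ℝ) t, ε * r := by
      refine setIntegral_mono_on hint1 hint2 measurableSet_Ioo fun r hr => ?_
      have hr0 : 0 < r := hr.1
      have hpos : 0 < ε ^ 2 + r ^ 2 := by positivity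
      have hfrac : r ^ 2 / (ε ^ 2 + r ^ 2) ≤ 1 := by
        rw [div_le_one hpos]; nlinarith
      have heq : r ^ 3 * (ε * (ε ^ 2 + r ^ 2)⁻¹) = ε * r * (r ^ 2 / (ε ^ 2 + r ^ 2)) := by
        field_simp
      rw [heq]
      calc ε * r * (r ^ 2 / (ε ^ 2 + r ^ 2)) ≤ ε * r * 1 :=
            mul_le_mul_of_nonneg_left hfrac (by positivity)
        _ = ε * r := by ring
    have hval : ∫ r in Ioo (0:ℝ) t, ε * r = ε * t ^ 2 / 2 := by
      rw [← integral_Ioc_eq_integral_Ioo, ← intervalIntegral.integral_of_le ht.le]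
      rw [intervalIntegral.integral_const_mul, integral_id]
      ring
    linarith
  calc 4 * (volume (Metric.ball (0:E4) 1)).toReal * ∫ r in Ioi (0:ℝ), r ^ 3 * F r
      ≤ 4 * (volume (Metric.ball (0:E4) 1)).toReal * (ε * t ^ 2 / 2) :=
        mul_le_mul_of_nonneg_left key hV
    _ = _ := rfl

lemma int_tail_integrable (p : E4) {τ : ℝ} (hτ : 0 < τ) :
    IntegrableOn (fun y : E4 => ((‖y - p‖ ^ 2)⁻¹) ^ 3) (Metric.ball p τ)ᶜ := by
  have hfr : ((Module.finrank ℝ E4 : ℝ)) < 6 := by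
    rw [finrank_euclideanSpace_fin]; norm_num
  have base : Integrable (fun z : E4 => (1 + ‖z‖) ^ (-(6:ℝ))) := integrable_one_add_norm hfr
  have hshift : Integrable (fun y : E4 => (1 + ‖y - p‖) ^ (-(6:ℝ))) := base.comp_sub_right p
  have hg : Integrable (fun y : E4 => (1 + 1/τ) ^ 6 * (1 + ‖y - p‖) ^ (-(6:ℝ))) :=
    hshift.const_mul _
  refine Integrable.mono' hg.integrableOn ?_ ?_
  · refine (Measurable.aestronglyMeasurable ?_)
    exact ((((measurable_id.sub_const p).norm).pow_const 2).inv.pow_const 3)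
  · rw [ae_restrict_iff' Metric.isOpen_ball.measurableSet.compl]
    refine Filter.Eventually.of_forall fun y hy => ?_
    have ha : τ ≤ ‖y - p‖ := by
      simpa [Metric.mem_ball, dist_eq_norm, not_lt] using hy
    have ha0 : 0 < ‖y - p‖ := lt_of_lt_of_le hτ ha
    set a := ‖y - p‖ with hadef
    have h1a : 1 + a ≤ (1 + 1/τ) * a := by
      have h2 : 1 ≤ a / τ := (one_le_div hτ).mpr ha
      have : (1 + 1/τ) * a = a + a / τ := by field_simp
      rw [this]; linarith
    have hrw : (1 + a) ^ (-(6:ℝ)) = ((1 + a) ^ (6:ℕ))⁻¹ := by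
      rw [Real.rpow_neg (by positivity), show (6:ℝ) = ((6:ℕ):ℝ) by norm_num,
        Real.rpow_natCast]
    rw [Real.norm_eq_abs, hrw]
    have hnn : (0:ℝ) ≤ ((a ^ 2)⁻¹) ^ 3 := by positivity
    rw [abs_of_nonneg hnn]
    have hkey : (1 + a) ^ (6:ℕ) ≤ (1 + 1/τ) ^ 6 * a ^ 6 := by
      calc (1 + a) ^ (6:ℕ) ≤ ((1 + 1/τ) * a) ^ 6 :=
            pow_le_pow_left₀ (by positivity) h1a 6
        _ = (1 + 1/τ) ^ 6 * a ^ 6 := mul_pow _ _ 6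
    have ha6 : (0:ℝ) < a ^ 6 := by positivity
    have h1a6 : (0:ℝ) < (1 + a) ^ (6:ℕ) := by positivity
    have heq : ((a ^ 2)⁻¹) ^ 3 = (a ^ 6)⁻¹ := by
      field_simp
    rw [heq, inv_eq_one_div, ← div_eq_mul_inv, div_le_div_iff₀ ha6 h1a6]
    nlinarith [hkey, h1a6]

set_option maxHeartbeats 2000000 in
/-- The contribution of `B_δ \\ B_τ(te₁)` to the cubic cross term is `o(ε²/t²)`
when `ε ≪ τ ≤ t/2 ≤ δ/4`. -/
theorem stmt18 (δ η : ℝ) (hδ : 0 < δ) (hη : 0 < η) :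
    ∃ ρ : ℝ, 0 < ρ ∧ ∀ ε τ t : ℝ, 0 < ε → 0 < τ → τ ≤ t / 2 → t ≤ δ / 2 → ε / τ < ρ →
      (∫ y in Metric.ball (0 : E4) δ \ Metric.ball (t • e1) τ,
          Ueps ε (t • e1) y ^ 3 * Ueps ε (-(t • e1)) y)
        ≤ η * ε ^ 2 / t ^ 2 := by
  classical
  set V : ℝ := (volume (Metric.ball (0:E4) 1)).toReal with hVdef
  have hV : 0 < V :=
    ENNReal.toReal_pos (Metric.measure_ball_pos volume _ one_pos).ne' measure_ball_lt_top.ne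
  have hc4 := c4_pos
  set D : ℝ := 4 * V * c4 ^ 4 with hDdef
  have hD : 0 < D := by positivity
  refine ⟨min 1 (η / (D + 1)), lt_min one_pos (by positivity), ?_⟩
  intro ε τ t hε hτ hτt htδ hρ
  have ht : 0 < t := by linarith
  have ht0 : t ≠ 0 := ht.ne'
  set p : E4 := t • e1 with hpdef
  have hpe : ‖p‖ = t := by
    rw [hpdef, norm_smul, Real.norm_eq_abs, abs_of_pos ht]
    have : ‖e1‖ = 1 := by
      rw [e1, EuclideanSpace.norm_single]; norm_num
    rw [this, mul_one]
  -- the explicit form of the integrand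
  set Fc : E4 → ℝ := fun y =>
    (c4 * ε * (ε ^ 2 + ‖y - p‖ ^ 2)⁻¹) ^ 3 * (c4 * ε * (ε ^ 2 + ‖y - (-p)‖ ^ 2)⁻¹) with hFcdef
  have hFc_eq : ∀ y, Ueps ε p y ^ 3 * Ueps ε (-p) y = Fc y := fun y => by
    rw [hFcdef, Ueps_eq hε, Ueps_eq hε]
  have hFc_nonneg : ∀ y, 0 ≤ Fc y := fun y => by
    rw [hFcdef]
    have h1 : (0:ℝ) ≤ c4 * ε * (ε ^ 2 + ‖y - p‖ ^ 2)⁻¹ := by positivity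
    have h2 : (0:ℝ) ≤ c4 * ε * (ε ^ 2 + ‖y - (-p)‖ ^ 2)⁻¹ := by positivity
    positivity
  have hFc_cont : Continuous Fc := by
    have hden : ∀ q : E4, Continuous fun y : E4 => (ε ^ 2 + ‖y - q‖ ^ 2)⁻¹ := by
      intro q
      refine Continuous.inv₀ ?_ fun y => by positivity
      exact continuous_const.add (((continuous_id.sub continuous_const).norm).pow 2)
    exact (((continuous_const.mul (hden p)).pow 3)).mul (continuous_const.mul (hden (-p)))
  set S : Set E4 := Metric.ball (0 : E4) δ \ Metric.ball p τ with hSdef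
  have hSmeas : MeasurableSet S :=
    Metric.isOpen_ball.measurableSet.diff Metric.isOpen_ball.measurableSet
  have hS_sub : S ⊆ (Metric.ball p τ)ᶜ := fun y hy => hy.2
  -- integrability of Fc on bounded sets
  have hFc_int : ∀ R : ℝ, ∀ q : E4, IntegrableOn Fc (Metric.closedBall q R) :=
    fun R q => hFc_cont.continuousOn.integrableOn_compact (isCompact_closedBall q R)
  have hFc_intS : IntegrableOn Fc S :=
    (hFc_int δ 0).mono_set ((Set.diff_subset).trans Metric.ball_subset_closedBall)
  set B2 : Set E4 := Metric.ball (-p) t with hB2def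
  have hB2meas : MeasurableSet B2 := Metric.isOpen_ball.measurableSet
  -- the two bounding functions
  set K1 : ℝ := (c4 * ε) ^ 4 * (t ^ 2)⁻¹ with hK1def
  set K2 : ℝ := (c4 * ε * (t ^ 2)⁻¹) ^ 3 * c4 with hK2def
  -- geometric fact: outside B2 the second center is far; inside B2 the first center is far
  have htri : ∀ y : E4, 2 * t ≤ ‖y - p‖ + ‖y - (-p)‖ := by
    intro y
    have h2 : dist p (-p) = 2 * t := by
      rw [dist_eq_norm, sub_neg_eq_add]
      have hpp : p + p = (2 * t) • e1 := by
        rw [hpdef, ← add_smul]; ring_nf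
      rw [hpp, norm_smul, Real.norm_eq_abs, abs_of_pos (by linarith : (0:ℝ) < 2 * t)]
      have he : ‖e1‖ = 1 := by rw [e1, EuclideanSpace.norm_single]; norm_num
      rw [he, mul_one]
    have h := dist_triangle p y (-p)
    rw [h2] at h
    have e3 : dist p y = ‖y - p‖ := by rw [dist_comm, dist_eq_norm]
    have e4 : dist y (-p) = ‖y - (-p)‖ := dist_eq_norm _ _
    rw [e3, e4] at h
    linarith
  -- piece 1 : integral over S \ B2
  have hpiece1 : ∫ y in S \ B2, Fc y ≤ K1 * (4 * V * ((τ ^ 2)⁻¹ / 2)) := by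
    have hbound_int : IntegrableOn (fun y : E4 => K1 * ((‖y - p‖ ^ 2)⁻¹) ^ 3)
        (Metric.ball p τ)ᶜ := (int_tail_integrable p hτ).const_mul K1
    have hmono1 : ∫ y in S \ B2, Fc y
        ≤ ∫ y in S \ B2, K1 * ((‖y - p‖ ^ 2)⁻¹) ^ 3 := by
      refine setIntegral_mono_on
        (hFc_intS.mono_set Set.diff_subset)
        (hbound_int.mono_set (Set.diff_subset.trans hS_sub))
        (hSmeas.diff hB2meas) fun y hy => ?_
      obtain ⟨hyS, hyB2⟩ := hy
      have ha : τ ≤ ‖y - p‖ := by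
        have := hyS.2
        simpa [Metric.mem_ball, dist_eq_norm, not_lt] using this
      have hb : t ≤ ‖y - (-p)‖ := by
        simpa [hB2def, Metric.mem_ball, dist_eq_norm, not_lt] using hyB2
      have ha0 : 0 < ‖y - p‖ := lt_of_lt_of_le hτ ha
      have hinv1 : (ε ^ 2 + ‖y - p‖ ^ 2)⁻¹ ≤ (‖y - p‖ ^ 2)⁻¹ :=
        inv_anti₀ (by positivity) (by nlinarith)
      have hinv2 : (ε ^ 2 + ‖y - (-p)‖ ^ 2)⁻¹ ≤ (t ^ 2)⁻¹ :=
        inv_anti₀ (by positivity) (by nlinarith)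
      calc Fc y = (c4 * ε) ^ 3 * ((ε ^ 2 + ‖y - p‖ ^ 2)⁻¹) ^ 3
            * ((c4 * ε) * (ε ^ 2 + ‖y - (-p)‖ ^ 2)⁻¹) := by rw [hFcdef]; ring
        _ ≤ (c4 * ε) ^ 3 * (((‖y - p‖ ^ 2)⁻¹) ^ 3) * ((c4 * ε) * (t ^ 2)⁻¹) := by
            gcongr <;> first | exact hinv1 | exact hinv2
        _ = K1 * ((‖y - p‖ ^ 2)⁻¹) ^ 3 := by rw [hK1def]; try ring
    have hmono2 : ∫ y in S \ B2, K1 * ((‖y - p‖ ^ 2)⁻¹) ^ 3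
        ≤ ∫ y in (Metric.ball p τ)ᶜ, K1 * ((‖y - p‖ ^ 2)⁻¹) ^ 3 := by
      refine setIntegral_mono_set hbound_int ?_ ?_
      · refine Filter.Eventually.of_forall fun y => ?_
        have : (0:ℝ) ≤ K1 := by positivity
        positivity
      · exact HasSubset.Subset.eventuallyLE (Set.diff_subset.trans hS_sub)
    have hval : ∫ y in (Metric.ball p τ)ᶜ, K1 * ((‖y - p‖ ^ 2)⁻¹) ^ 3
        = K1 * (4 * V * ((τ ^ 2)⁻¹ / 2)) := by
      rw [MeasureTheory.integral_const_mul, int_tail p hτ]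
    linarith
  -- piece 2 : integral over S ∩ B2
  have hpiece2 : ∫ y in S ∩ B2, Fc y ≤ K2 * (4 * V * (ε * t ^ 2 / 2)) := by
    have hg2cont : Continuous fun y : E4 => K2 * (ε * (ε ^ 2 + ‖y - (-p)‖ ^ 2)⁻¹) := by
      refine continuous_const.mul (continuous_const.mul (Continuous.inv₀ ?_ fun y => by positivity))
      exact continuous_const.add (((continuous_id.sub continuous_const).norm).pow 2)
    have hg2int : IntegrableOn (fun y : E4 => K2 * (ε * (ε ^ 2 + ‖y - (-p)‖ ^ 2)⁻¹)) B2 :=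
      (hg2cont.continuousOn.integrableOn_compact (isCompact_closedBall (-p) t)).mono_set
        Metric.ball_subset_closedBall
    have hmono1 : ∫ y in S ∩ B2, Fc y
        ≤ ∫ y in S ∩ B2, K2 * (ε * (ε ^ 2 + ‖y - (-p)‖ ^ 2)⁻¹) := by
      refine setIntegral_mono_on
        (hFc_intS.mono_set Set.inter_subset_left)
        (hg2int.mono_set Set.inter_subset_right)
        (hSmeas.inter hB2meas) fun y hy => ?_
      obtain ⟨hyS, hyB2⟩ := hy
      have hb : ‖y - (-p)‖ < t := by
        simpa [hB2def, Metric.mem_ball, dist_eq_norm] using hyB2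
      have ha : t ≤ ‖y - p‖ := by
        have := htri y
        linarith
      have hinv1 : (ε ^ 2 + ‖y - p‖ ^ 2)⁻¹ ≤ (t ^ 2)⁻¹ :=
        inv_anti₀ (by positivity) (by nlinarith)
      calc Fc y = (c4 * ε * (ε ^ 2 + ‖y - p‖ ^ 2)⁻¹) ^ 3
            * c4 * (ε * (ε ^ 2 + ‖y - (-p)‖ ^ 2)⁻¹) := by rw [hFcdef]; ring
        _ ≤ (c4 * ε * (t ^ 2)⁻¹) ^ 3 * c4 * (ε * (ε ^ 2 + ‖y - (-p)‖ ^ 2)⁻¹) := by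
            gcongr
        _ = K2 * (ε * (ε ^ 2 + ‖y - (-p)‖ ^ 2)⁻¹) := by rw [hK2def]; try ring
    have hmono2 : ∫ y in S ∩ B2, K2 * (ε * (ε ^ 2 + ‖y - (-p)‖ ^ 2)⁻¹)
        ≤ ∫ y in B2, K2 * (ε * (ε ^ 2 + ‖y - (-p)‖ ^ 2)⁻¹) := by
      refine setIntegral_mono_set hg2int ?_ ?_
      · refine Filter.Eventually.of_forall fun y => ?_
        have hK2 : (0:ℝ) ≤ K2 := by positivity
        positivity
      · exact HasSubset.Subset.eventuallyLE Set.inter_subset_right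
    have hval : ∫ y in B2, K2 * (ε * (ε ^ 2 + ‖y - (-p)‖ ^ 2)⁻¹)
        ≤ K2 * (4 * V * (ε * t ^ 2 / 2)) := by
      rw [MeasureTheory.integral_const_mul]
      have hK2 : (0:ℝ) ≤ K2 := by positivity
      exact mul_le_mul_of_nonneg_left (int_ball_bound (-p) hε ht) hK2
    linarith
  -- put the pieces together
  have hsplit : ∫ y in S, Fc y = (∫ y in S ∩ B2, Fc y) + ∫ y in S \ B2, Fc y :=
    (integral_inter_add_diff hB2meas hFc_intS).symm
  have htotal : ∫ y in S, Fc y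
      ≤ K1 * (4 * V * ((τ ^ 2)⁻¹ / 2)) + K2 * (4 * V * (ε * t ^ 2 / 2)) := by
    rw [hsplit]; linarith
  -- final arithmetic
  have hgoal_eq : ∫ y in S, Ueps ε p y ^ 3 * Ueps ε (-p) y = ∫ y in S, Fc y :=
    setIntegral_congr_fun hSmeas fun y _ => hFc_eq y
  set ρ := min 1 (η / (D + 1)) with hρdef
  have hρ1 : ρ ≤ 1 := min_le_left _ _
  have hρ2 : ρ ≤ η / (D + 1) := min_le_right _ _
  have hρpos : 0 < ρ := lt_min one_pos (by positivity)
  have hτ0 : τ ≠ 0 := hτ.ne'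
  have ha : ε ^ 2 / τ ^ 2 ≤ ρ ^ 2 := by
    have h := pow_le_pow_left₀ (by positivity : (0:ℝ) ≤ ε / τ) hρ.le 2
    calc ε ^ 2 / τ ^ 2 = (ε / τ) ^ 2 := by rw [div_pow]
      _ ≤ ρ ^ 2 := h
  have hb : ε ^ 2 / t ^ 2 ≤ ρ ^ 2 := by
    have h1 : ε / t ≤ ε / τ := by
      apply div_le_div_of_nonneg_left hε.le hτ
      linarith
    have h2 := pow_le_pow_left₀ (by positivity : (0:ℝ) ≤ ε / t) (h1.trans hρ.le) 2
    calc ε ^ 2 / t ^ 2 = (ε / t) ^ 2 := by rw [div_pow]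
      _ ≤ ρ ^ 2 := h2
  have hDρ : D * ρ ≤ η := by
    have h1 : D * ρ ≤ D * (η / (D + 1)) := mul_le_mul_of_nonneg_left hρ2 hD.le
    have h2 : D * (η / (D + 1)) ≤ η := by
      rw [mul_div_assoc', div_le_iff₀ (by positivity : (0:ℝ) < D + 1)]
      nlinarith
    linarith
  have hρ2le : ρ ^ 2 ≤ ρ := by nlinarith
  have hsum : 2 * V * c4 ^ 4 * (ε ^ 2 / τ ^ 2) + 2 * V * c4 ^ 4 * (ε ^ 2 / t ^ 2) ≤ η := by
    have hWnn : (0:ℝ) ≤ 2 * V * c4 ^ 4 := by positivity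
    calc 2 * V * c4 ^ 4 * (ε ^ 2 / τ ^ 2) + 2 * V * c4 ^ 4 * (ε ^ 2 / t ^ 2)
        ≤ 2 * V * c4 ^ 4 * ρ ^ 2 + 2 * V * c4 ^ 4 * ρ ^ 2 := by
          have := mul_le_mul_of_nonneg_left ha hWnn
          have := mul_le_mul_of_nonneg_left hb hWnn
          linarith
      _ = D * ρ ^ 2 := by rw [hDdef]; ring
      _ ≤ D * ρ := mul_le_mul_of_nonneg_left hρ2le hD.le
      _ ≤ η := hDρ
  have hfinal : K1 * (4 * V * ((τ ^ 2)⁻¹ / 2)) + K2 * (4 * V * (ε * t ^ 2 / 2))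
      ≤ η * ε ^ 2 / t ^ 2 := by
    have e1' : K1 * (4 * V * ((τ ^ 2)⁻¹ / 2))
        = (2 * V * c4 ^ 4 * (ε ^ 2 / τ ^ 2)) * (ε ^ 2 / t ^ 2) := by
      rw [hK1def]; field_simp; ring
    have e2' : K2 * (4 * V * (ε * t ^ 2 / 2))
        = (2 * V * c4 ^ 4 * (ε ^ 2 / t ^ 2)) * (ε ^ 2 / t ^ 2) := by
      rw [hK2def]; field_simp; ring
    rw [e1', e2', ← add_mul]
    have hnn : (0:ℝ) ≤ ε ^ 2 / t ^ 2 := by positivity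
    calc (2 * V * c4 ^ 4 * (ε ^ 2 / τ ^ 2) + 2 * V * c4 ^ 4 * (ε ^ 2 / t ^ 2)) * (ε ^ 2 / t ^ 2)
        ≤ η * (ε ^ 2 / t ^ 2) := mul_le_mul_of_nonneg_right hsum hnn
      _ = η * ε ^ 2 / t ^ 2 := by ring
  rw [hgoal_eq]
  exact le_trans htotal hfinal
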